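/- arXiv:1410.3063 — 3 statements merged into one kernel-verified Lean document; each statement's English description precedes it below -/
import Mathlib

section
/- Let 𝔞 : V × V → ℂ be a bounded coercive sesquilinear form with constants M, δ and embedding constant c_H for V ↪ H. Let A be the part in H of the associated operator 𝒜. Then there exists an angle θ ∈ [0, π/2) depending only on M, δ, c_H such that the spectrum of A is contained in the sector Σ_θ = {r e^{iφ} : r > 0, |φ| < θ}, and for all λ ∉ Σ_θ one has ‖(λ − A)^{-1}‖_{ℒ(H)} ≤ c/(1 + |λ|) for some constant c depending only on M, δ, c_H, θ. -/
noncomputable def goodSigma (M δ : ℝ) : ℝ := M / Real.sqrt (M^2 + δ^2)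
noncomputable def goodEta (M δ : ℝ) : ℝ := (1 - goodSigma M δ) / 2
noncomputable def goodEps (M δ cH : ℝ) : ℝ :=
  min ((δ/2) / (cH^2 + δ/2)) (Real.sqrt (goodEta M δ) / (2*cH^2/δ + 1))

lemma goodSigma_pos {M δ : ℝ} (hM : 0 < M) (hδ : 0 < δ) : 0 < goodSigma M δ := by
  have h : 0 < Real.sqrt (M^2 + δ^2) := Real.sqrt_pos.mpr (by positivity)
  exact div_pos hM h

lemma goodSigma_lt_one {M δ : ℝ} (hM : 0 < M) (hδ : 0 < δ) : goodSigma M δ < 1 := by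
  have h : M < Real.sqrt (M^2 + δ^2) := by
    have : Real.sqrt (M^2) < Real.sqrt (M^2 + δ^2) :=
      Real.sqrt_lt_sqrt (by positivity) (by nlinarith)
    rwa [Real.sqrt_sq hM.le] at this
  have h0 : 0 < Real.sqrt (M^2 + δ^2) := lt_trans hM h
  rw [goodSigma, div_lt_one h0]; exact h

lemma goodEta_pos {M δ : ℝ} (hM : 0 < M) (hδ : 0 < δ) : 0 < goodEta M δ := by
  have := goodSigma_lt_one hM hδ; rw [goodEta]; linarith

lemma goodEta_lt_one {M δ : ℝ} (hM : 0 < M) (hδ : 0 < δ) : goodEta M δ < 1 := by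
  have := goodSigma_pos hM hδ; rw [goodEta]; linarith

lemma goodEps_pos {M δ cH : ℝ} (hM : 0 < M) (hδ : 0 < δ) (hcH : 0 < cH) :
    0 < goodEps M δ cH := by
  have h1 : (0:ℝ) < (δ/2) / (cH^2 + δ/2) := by positivity
  have h2 : (0:ℝ) < Real.sqrt (goodEta M δ) / (2*cH^2/δ + 1) := by
    have := goodEta_pos hM hδ
    have hs : 0 < Real.sqrt (goodEta M δ) := Real.sqrt_pos.mpr this
    have hd : (0:ℝ) < 2*cH^2/δ + 1 := by positivity
    positivity
  exact lt_min h1 h2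

lemma cosine_ineq (M δ : ℝ) (hM : 0 < M) (hδ : 0 < δ)
    (p q n x y : ℝ) (hn : 0 ≤ n) (hp : δ*n ≤ p) (hq : |q| ≤ M*n)
    (hz : x ≤ 0 ∨ x / goodEta M δ ≤ |y|) :
    p*x + q*y ≤ (1 - goodEta M δ) * (Real.sqrt (p^2+q^2) * Real.sqrt (x^2+y^2)) := by
  set σ := goodSigma M δ with hσdef
  set η := goodEta M δ with hηdef
  have hσ0 : 0 < σ := goodSigma_pos hM hδ
  have hσ1 : σ < 1 := goodSigma_lt_one hM hδ
  have hη0 : 0 < η := goodEta_pos hM hδ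
  set A := Real.sqrt (p^2+q^2) with hAdef
  set Z := Real.sqrt (x^2+y^2) with hZdef
  have hA0 : 0 ≤ A := Real.sqrt_nonneg _
  have hZ0 : 0 ≤ Z := Real.sqrt_nonneg _
  have hA2 : A^2 = p^2+q^2 := Real.sq_sqrt (by positivity)
  have hZ2 : Z^2 = x^2+y^2 := Real.sq_sqrt (by positivity)
  have hp0 : 0 ≤ p := le_trans (by positivity) hp
  have hpA : p ≤ A := by nlinarith
  have hyZ : |y| ≤ Z := by
    have : |y| = Real.sqrt (y^2) := (Real.sqrt_sq_eq_abs y).symm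
    rw [this]; exact Real.sqrt_le_sqrt (by nlinarith)
  have hqσ : |q| ≤ σ * A := by
    have hroot : 0 < Real.sqrt (M^2 + δ^2) := Real.sqrt_pos.mpr (by positivity)
    have key : |q| * Real.sqrt (M^2+δ^2) ≤ M * A := by
      have h1 : |q| * Real.sqrt (M^2+δ^2) = Real.sqrt (q^2 * (M^2+δ^2)) := by
        rw [Real.sqrt_mul (by positivity), Real.sqrt_sq_eq_abs]
      have h2 : M * A = Real.sqrt (M^2 * (p^2+q^2)) := by
        rw [Real.sqrt_mul (by positivity), Real.sqrt_sq hM.le]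
      rw [h1, h2]
      apply Real.sqrt_le_sqrt
      have hqd : δ * |q| ≤ M * p := by nlinarith [abs_nonneg q]
      have h3 : (δ*|q|)*(δ*|q|) ≤ (M*p)*(M*p) :=
        mul_le_mul hqd hqd (by positivity) (mul_nonneg hM.le hp0)
      nlinarith [sq_abs q, h3]
    rw [hσdef, goodSigma, div_mul_eq_mul_div, le_div_iff₀ hroot]
    linarith [key]
  have hησ : η + σ = 1 - η := by rw [hηdef, goodEta]; ring
  have hσ1η : σ ≤ 1 - η := by rw [hηdef, goodEta]; linarith
  have habsq : q*y ≤ σ * A * Z := by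
    have h1 : q*y ≤ |q| * |y| := by
      have := le_abs_self (q*y); rwa [abs_mul] at this
    have h2 : |q| * |y| ≤ (σ*A) * Z := mul_le_mul hqσ hyZ (abs_nonneg y) (by positivity)
    linarith
  have hAZ : 0 ≤ A * Z := mul_nonneg hA0 hZ0
  have hkey : σ * A * Z ≤ (1-η) * (A*Z) := by nlinarith [hAZ, hσ1η]
  rcases hz with hx | hxy
  · have hpx : p*x ≤ 0 := mul_nonpos_of_nonneg_of_nonpos hp0 hx
    linarith
  · rcases le_or_gt x 0 with hx | hx
    · have hpx : p*x ≤ 0 := mul_nonpos_of_nonneg_of_nonpos hp0 hx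
      linarith
    · have hxηy : x ≤ η * |y| := by
        rw [div_le_iff₀ hη0] at hxy; linarith [hxy]
      have hpx : p*x ≤ A*x := mul_le_mul_of_nonneg_right hpA hx.le
      have hx2 : A*x ≤ A*(η*|y|) := mul_le_mul_of_nonneg_left hxηy hA0
      have hx3 : A*(η*|y|) ≤ A*(η*Z) :=
        mul_le_mul_of_nonneg_left (mul_le_mul_of_nonneg_left hyZ hη0.le) hA0
      have e1 : A*(η*Z) = η*(A*Z) := by ring
      have e2 : σ*A*Z = σ*(A*Z) := by ring
      have e3 : (1-η)*(A*Z) = η*(A*Z) + σ*(A*Z) := by rw [← hησ]; ring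
      linarith

lemma core_est (M δ cH : ℝ) (hM : 0 < M) (hδ : 0 < δ) (hcH : 0 < cH)
    (p q n s x y : ℝ)
    (hn : 0 ≤ n) (hs0 : 0 ≤ s) (hscH : s ≤ cH^2*n) (hp : δ*n ≤ p) (hq : |q| ≤ M*n)
    (hz : x ≤ 0 ∨ x / goodEta M δ ≤ |y|) :
    Real.sqrt (goodEta M δ) * (δ*n) ≤ Real.sqrt ((p-x*s)^2+(q-y*s)^2) ∧
    goodEps M δ cH * ((1+Real.sqrt (x^2+y^2))*s) ≤ Real.sqrt ((p-x*s)^2+(q-y*s)^2) := by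
  set η := goodEta M δ with hηdef
  set ε := goodEps M δ cH with hεdef
  have hη0 : 0 < η := goodEta_pos hM hδ
  have hη1 : η < 1 := goodEta_lt_one hM hδ
  set A := Real.sqrt (p^2+q^2) with hAdef
  set Z := Real.sqrt (x^2+y^2) with hZdef
  set E := (p-x*s)^2+(q-y*s)^2 with hEdef
  set D := Real.sqrt E with hDdef
  have hA0 : 0 ≤ A := Real.sqrt_nonneg _
  have hZ0 : 0 ≤ Z := Real.sqrt_nonneg _
  have hD0 : 0 ≤ D := Real.sqrt_nonneg _
  have hE0 : 0 ≤ E := by positivity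
  have hA2 : A^2 = p^2+q^2 := Real.sq_sqrt (by positivity)
  have hZ2 : Z^2 = x^2+y^2 := Real.sq_sqrt (by positivity)
  have hp0 : 0 ≤ p := le_trans (by positivity) hp
  have hc : p*x + q*y ≤ (1-η) * (A*Z) := cosine_ineq M δ hM hδ p q n x y hn hp hq hz
  have expand : E = A^2 + s^2*Z^2 - 2*(s*(p*x+q*y)) := by rw [hEdef, hA2, hZ2]; ring
  have hE : η*A^2 + η*(s^2*Z^2) ≤ E := by
    have hcs : s*(p*x+q*y) ≤ s*((1-η)*(A*Z)) := mul_le_mul_of_nonneg_left hc hs0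
    have hsq : (0:ℝ) ≤ (1-η)*(A-s*Z)^2 :=
      mul_nonneg (by linarith) (sq_nonneg _)
    have e2 : A^2+s^2*Z^2 - 2*(s*((1-η)*(A*Z))) - (η*A^2 + η*(s^2*Z^2))
        = (1-η)*(A-s*Z)^2 := by ring
    linarith
  have hpA : p ≤ A := by nlinarith [sq_nonneg q]
  have hδnA : δ*n ≤ A := le_trans hp hpA
  have hδn2 : (δ*n)^2 ≤ A^2 := pow_le_pow_left₀ (by positivity) hδnA 2
  have hE1 : Real.sqrt η * (δ*n) ≤ D := by
    rw [hDdef]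
    rw [show Real.sqrt η * (δ*n) = Real.sqrt (η * (δ*n)^2) by
      rw [Real.sqrt_mul hη0.le, Real.sqrt_sq (by positivity)]]
    apply Real.sqrt_le_sqrt
    have h1 : η*(δ*n)^2 ≤ η*A^2 := mul_le_mul_of_nonneg_left hδn2 hη0.le
    have h2 : (0:ℝ) ≤ η*(s^2*Z^2) := by positivity
    linarith
  refine ⟨hE1, ?_⟩
  have hεle1 : ε ≤ (δ/2) / (cH^2 + δ/2) := min_le_left _ _
  have hεle2 : ε ≤ Real.sqrt η / (2*cH^2/δ + 1) := min_le_right _ _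
  have hε0 : 0 < ε := goodEps_pos hM hδ hcH
  rcases le_or_gt (Z*s) ((δ/2)*n) with hsmall | hbig
  · -- D ≥ A - sZ ≥ δ n /2
    have hAsZ : A - s*Z ≤ D := by
      rcases le_or_gt (A - s*Z) 0 with h | h
      · linarith
      · rw [hDdef]
        rw [show A - s*Z = Real.sqrt ((A-s*Z)^2) from (Real.sqrt_sq h.le).symm]
        apply Real.sqrt_le_sqrt
        have hAZ : p*x+q*y ≤ A*Z := by
          have h1 : (0:ℝ) ≤ η*(A*Z) := mul_nonneg hη0.le (mul_nonneg hA0 hZ0)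
          have e : (1-η)*(A*Z) = A*Z - η*(A*Z) := by ring
          linarith
        have h2 := mul_le_mul_of_nonneg_left hAZ hs0
        have e3 : (A-s*Z)^2 = A^2+s^2*Z^2 - 2*(s*(A*Z)) := by ring
        linarith
    have hcomm : s*Z = Z*s := mul_comm s Z
    have hD2 : (δ/2)*n ≤ D := by linarith
    have hrhs : ε * ((1+Z)*s) ≤ (δ/2)*n := by
      have h2 : (1+Z)*s ≤ cH^2*n + (δ/2)*n := by
        have e : (1+Z)*s = s + Z*s := by ring
        linarith
      have h3 : ε * ((1+Z)*s) ≤ ε * (cH^2*n + (δ/2)*n) :=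
        mul_le_mul_of_nonneg_left h2 hε0.le
      have h4 : ε * (cH^2*n + (δ/2)*n) ≤ ((δ/2) / (cH^2 + δ/2)) * ((cH^2 + δ/2)*n) := by
        have hnn : (0:ℝ) ≤ (cH^2 + δ/2)*n := by positivity
        have e : cH^2*n + (δ/2)*n = (cH^2 + δ/2)*n := by ring
        rw [e]
        exact mul_le_mul_of_nonneg_right hεle1 hnn
      have h5 : ((δ/2) / (cH^2 + δ/2)) * ((cH^2 + δ/2)*n) = (δ/2)*n := by
        have hne : cH^2 + δ/2 ≠ 0 := by positivity
        field_simp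
      linarith
    linarith
  · -- big case : 1 + Z ≤ (2cH²/δ+1) Z
    have hn0 : 0 < n := by
      rcases lt_or_ge 0 n with h | h
      · exact h
      · exfalso
        have hn_eq : n = 0 := le_antisymm h hn
        have hs_eq : s = 0 := le_antisymm (by rw [hn_eq] at hscH; linarith) hs0
        rw [hn_eq, hs_eq] at hbig; simp at hbig
    have hZcH : δ/2 < Z * cH^2 := by
      have h1 : Z*s ≤ Z*(cH^2*n) := mul_le_mul_of_nonneg_left hscH hZ0
      have e : Z*(cH^2*n) = (Z*cH^2)*n := by ring
      have h2 : (δ/2)*n < (Z*cH^2)*n := by linarith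
      exact lt_of_mul_lt_mul_right h2 hn0.le
    have h1Z : 1 + Z ≤ (2*cH^2/δ + 1) * Z := by
      have h1 : 1 ≤ (2*cH^2/δ) * Z := by
        rw [div_mul_eq_mul_div, le_div_iff₀ hδ]
        have e : Z*cH^2 = cH^2*Z := by ring
        linarith
      have e : (2*cH^2/δ + 1)*Z = (2*cH^2/δ)*Z + Z := by ring
      linarith
    have hDZ : Real.sqrt η * (Z*s) ≤ D := by
      rw [hDdef]
      rw [show Real.sqrt η * (Z*s) = Real.sqrt (η * (Z*s)^2) by
        rw [Real.sqrt_mul hη0.le, Real.sqrt_sq (mul_nonneg hZ0 hs0)]]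
      apply Real.sqrt_le_sqrt
      have h1 : (0:ℝ) ≤ η*A^2 := by positivity
      have e : η*(Z*s)^2 = η*(s^2*Z^2) := by ring
      linarith
    have hd0 : (0:ℝ) < 2*cH^2/δ + 1 := by positivity
    have h6 : ε * ((1+Z)*s) ≤ ε * ((2*cH^2/δ + 1) * Z * s) := by
      apply mul_le_mul_of_nonneg_left _ hε0.le
      have := mul_le_mul_of_nonneg_right h1Z hs0
      linarith [this]
    have h7 : ε * ((2*cH^2/δ + 1) * Z * s) ≤ Real.sqrt η * (Z*s) := by
      have hZs : (0:ℝ) ≤ Z*s := mul_nonneg hZ0 hs0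
      have h8 := mul_le_mul_of_nonneg_right hεle2 (mul_nonneg hd0.le hZs)
      calc ε * ((2*cH^2/δ + 1) * Z * s) = ε * ((2*cH^2/δ + 1) * (Z*s)) := by ring
        _ ≤ (Real.sqrt η / (2*cH^2/δ + 1)) * ((2*cH^2/δ + 1) * (Z*s)) := h8
        _ = Real.sqrt η * (Z*s) := by
              have hne : 2*cH^2/δ + 1 ≠ 0 := by positivity
              field_simp
    linarith


/- STATEMENT 2: sectoriality of the part A of 𝒜 in H: there is θ ∈ [0, π/2)
(depending only on M, δ, c_H) such that every λ outside the sector Σ_θ is in the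
resolvent set of A with ‖(λ − A)⁻¹‖_{ℒ(H)} ≤ c/(1+|λ|). The part A of 𝒜 in H is
described through the form: for u ∈ V and w ∈ H, "u ∈ D(A) and A u = w" means
𝔞(u,v) = (v|w)_H for all v ∈ V. -/

/-- The open sector Σ_θ = {r e^{iφ} : r > 0, |φ| < θ}. -/
def Sector (θ : ℝ) : Set ℂ := {z : ℂ | z ≠ 0 ∧ |Complex.arg z| < θ}

set_option maxHeartbeats 1000000 in
theorem statement2
    (V H : Type*) [NormedAddCommGroup V] [InnerProductSpace ℂ V] [CompleteSpace V]
    [NormedAddCommGroup H] [InnerProductSpace ℂ H] [CompleteSpace H]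
    (J : V →L[ℂ] H) (hJinj : Function.Injective J) (hJdense : DenseRange J)
    (M δ cH : ℝ) (hδ : 0 < δ) (hM : 0 < M) (hcH : 0 < cH)
    (hJbdd : ∀ v : V, ‖J v‖ ≤ cH * ‖v‖) :
    ∃ θ ∈ Set.Ico 0 (Real.pi / 2), ∃ c > 0,
      ∀ a : V →L[ℂ] (V →SL[starRingEnd ℂ] ℂ),
        (∀ u v : V, ‖a u v‖ ≤ M * ‖u‖ * ‖v‖) →
        (∀ u : V, δ * ‖u‖ ^ 2 ≤ (a u u).re) →
        ∀ z : ℂ, z ∉ Sector θ →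
          ∃ R : H →L[ℂ] H,
            -- (λ - A) ∘ R = Id : R x ∈ D(A) and A (R x) = z • R x - x
            (∀ x : H, ∃ u : V, J u = R x ∧
                ∀ v : V, a u v = (inner ℂ (J v) (z • R x - x) : ℂ)) ∧
            -- R ∘ (λ - A) = Id on D(A)
            (∀ (u : V) (w : H), (∀ v : V, a u v = (inner ℂ (J v) w : ℂ)) →
                R (z • J u - w) = J u) ∧
            ‖R‖ ≤ c / (1 + ‖z‖) := by
  classical
  have hη0 : 0 < goodEta M δ := goodEta_pos hM hδ
  set η := goodEta M δ with hηdef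
  set ε := goodEps M δ cH with hεdef
  have hε0 : 0 < ε := goodEps_pos hM hδ hcH
  have harctan0 : (0:ℝ) ≤ Real.arctan (1/η) := by
    have h1 : Real.arctan 0 < Real.arctan (1/η) :=
      Real.arctan_strictMono (by positivity)
    rw [Real.arctan_zero] at h1
    exact h1.le
  refine ⟨Real.arctan (1/η), Set.mem_Ico.mpr ⟨harctan0, Real.arctan_lt_pi_div_two _⟩,
    ε⁻¹, by positivity, ?_⟩
  intro a ha hco z hzS
  -- Step 1 : real consequence of z ∉ Sector
  have hzRe : z.re ≤ 0 ∨ z.re / η ≤ |z.im| := by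
    by_cases h1 : z.re ≤ 0
    · exact Or.inl h1
    · push_neg at h1
      right
      have hz0 : z ≠ 0 := fun h => by simp [h] at h1
      have harg : Real.arctan (1/η) ≤ |z.arg| := by
        by_contra hlt
        push_neg at hlt
        exact hzS ⟨hz0, hlt⟩
      have habs : |z.arg| < Real.pi/2 := Complex.abs_arg_lt_pi_div_two_iff.mpr (Or.inl h1)
      have hmono : Real.tan (Real.arctan (1/η)) ≤ Real.tan |z.arg| := by
        apply Real.strictMonoOn_tan.monotoneOn ?_ ?_ harg
        · exact Set.mem_Ioo.mpr ⟨by linarith [Real.neg_pi_div_two_lt_arctan (1/η)],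
            Real.arctan_lt_pi_div_two _⟩
        · exact Set.mem_Ioo.mpr ⟨by
            have := abs_nonneg z.arg
            have := Real.pi_pos
            linarith, habs⟩
      rw [Real.tan_arctan] at hmono
      have hre : z.re / η = 1/η * z.re := by ring
      rcases le_or_gt 0 z.arg with h2 | h2
      · rw [abs_of_nonneg h2, Complex.tan_arg] at hmono
        have h3 : 1/η * z.re ≤ z.im := (le_div_iff₀ h1).mp hmono
        have := le_abs_self z.im
        linarith [hre ▸ h3]
      · rw [abs_of_neg h2, Real.tan_neg, Complex.tan_arg, neg_div' ] at hmono
        -- hmono : 1/η ≤ (-z.im)/z.re maybe; handle generically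
        have h3 : 1/η * z.re ≤ -z.im := by
          have h4 : 1/η ≤ -z.im / z.re := by
            rw [neg_div] at hmono ⊢
            exact hmono
          exact (le_div_iff₀ h1).mp h4
        have := neg_le_abs z.im
        rw [hre]
        linarith
  -- Step 2 : build B
  set Cz : ℝ := M + ‖z‖ * cH^2 with hCzdef
  have hCz0 : (0:ℝ) ≤ Cz := by positivity
  let g : V → (V →L[ℂ] ℂ) := fun u => LinearMap.mkContinuous
    { toFun := fun v => (starRingEnd ℂ) (a u v) - (starRingEnd ℂ) z * (inner ℂ (J u) (J v) : ℂ)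
      map_add' := by
        intro v v'
        simp only [map_add, inner_add_right]
        ring
      map_smul' := by
        intro c v
        simp only [ContinuousLinearMap.map_smulₛₗ, inner_smul_right, smul_eq_mul,
          map_mul, RingHom.id_apply, starRingEnd_self_apply]
        ring }
    (Cz * ‖u‖)
    (by
      intro v
      simp only [LinearMap.coe_mk, AddHom.coe_mk]
      have h1 : ‖a u v‖ ≤ M*‖u‖*‖v‖ := ha u v
      have h2 : ‖(inner ℂ (J u) (J v) : ℂ)‖ ≤ ‖J u‖ * ‖J v‖ := norm_inner_le_norm _ _
      have h5 : ‖(inner ℂ (J u) (J v) : ℂ)‖ ≤ (cH*‖u‖)*(cH*‖v‖) :=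
        h2.trans (mul_le_mul (hJbdd u) (hJbdd v) (norm_nonneg _) (by positivity))
      have e1 : ‖(starRingEnd ℂ) (a u v)‖ = ‖a u v‖ := RCLike.norm_conj _
      have e2 : ‖(starRingEnd ℂ) z * (inner ℂ (J u) (J v) : ℂ)‖
          = ‖z‖ * ‖(inner ℂ (J u) (J v) : ℂ)‖ := by
        rw [norm_mul, RCLike.norm_conj]
      have h6 := norm_sub_le ((starRingEnd ℂ) (a u v))
        ((starRingEnd ℂ) z * (inner ℂ (J u) (J v) : ℂ))
      rw [e1, e2] at h6
      have h7 : ‖z‖ * ‖(inner ℂ (J u) (J v) : ℂ)‖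
          ≤ ‖z‖ * ((cH*‖u‖)*(cH*‖v‖)) :=
        mul_le_mul_of_nonneg_left h5 (norm_nonneg z)
      have e3 : M*‖u‖*‖v‖ + ‖z‖ * ((cH*‖u‖)*(cH*‖v‖)) = (Cz*‖u‖)*‖v‖ := by
        rw [hCzdef]; ring
      linarith)
  have hgapply : ∀ u v, g u v
      = (starRingEnd ℂ) (a u v) - (starRingEnd ℂ) z * (inner ℂ (J u) (J v) : ℂ) :=
    fun u v => rfl
  let Blin : V →ₗ[ℂ] V :=
    { toFun := fun u => (InnerProductSpace.toDual ℂ V).symm (g u)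
      map_add' := by
        intro u u'
        have hg : g (u+u') = g u + g u' := by
          ext v
          simp only [hgapply, ContinuousLinearMap.add_apply, map_add,
            ContinuousLinearMap.add_apply, inner_add_left]
          ring
        show (InnerProductSpace.toDual ℂ V).symm (g (u + u'))
            = (InnerProductSpace.toDual ℂ V).symm (g u) + (InnerProductSpace.toDual ℂ V).symm (g u')
        rw [hg, map_add]
      map_smul' := by
        intro c u
        have hg : g (c • u) = (starRingEnd ℂ) c • g u := by
          ext v
          simp only [hgapply, ContinuousLinearMap.smul_apply, smul_eq_mul]
          have e1 : a (c • u) v = c * a u v := by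
            rw [map_smul]; rfl
          rw [e1, map_smul J, inner_smul_left]
          simp only [map_mul, starRingEnd_self_apply]
          ring
        show (InnerProductSpace.toDual ℂ V).symm (g (c • u))
            = (RingHom.id ℂ) c • (InnerProductSpace.toDual ℂ V).symm (g u)
        rw [hg, LinearIsometryEquiv.map_smulₛₗ]
        simp }
  have hBlinnorm : ∀ u, ‖Blin u‖ ≤ Cz * ‖u‖ := by
    intro u
    show ‖(InnerProductSpace.toDual ℂ V).symm (g u)‖ ≤ Cz * ‖u‖
    rw [LinearIsometryEquiv.norm_map]
    exact LinearMap.mkContinuous_norm_le _ (by positivity) _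
  let B : V →L[ℂ] V := Blin.mkContinuous Cz hBlinnorm
  have hBapply : ∀ u, B u = (InnerProductSpace.toDual ℂ V).symm (g u) := fun u => rfl
  have hB : ∀ u v : V, (inner ℂ v (B u) : ℂ) = a u v - z * (inner ℂ (J v) (J u) : ℂ) := by
    intro u v
    have h1 : (inner ℂ (B u) v : ℂ) = g u v := by
      rw [hBapply]; exact InnerProductSpace.toDual_symm_apply
    have h2 : (inner ℂ v (B u) : ℂ) = (starRingEnd ℂ) ((inner ℂ (B u) v : ℂ)) :=
      (inner_conj_symm _ _).symm
    rw [h2, h1, hgapply]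
    simp only [map_sub, map_mul, starRingEnd_self_apply, Complex.conj_conj, inner_conj_symm]
  -- Step 3 : quantitative estimates
  have hEst : ∀ u : V,
      Real.sqrt η * (δ*‖u‖^2) ≤ ‖(inner ℂ u (B u) : ℂ)‖ ∧
      ε * ((1+‖z‖)*‖J u‖^2) ≤ ‖(inner ℂ u (B u) : ℂ)‖ := by
    intro u
    have hw : (inner ℂ u (B u) : ℂ) = a u u - z * ((‖J u‖^2 : ℝ) : ℂ) := by
      rw [hB u u, inner_self_eq_norm_sq_to_K]
      norm_cast
    have hre : (a u u - z * ((‖J u‖^2 : ℝ):ℂ)).re = (a u u).re - z.re*‖J u‖^2 := by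
      simp only [Complex.sub_re, Complex.mul_re, Complex.ofReal_re, Complex.ofReal_im]
      ring
    have him : (a u u - z * ((‖J u‖^2 : ℝ):ℂ)).im = (a u u).im - z.im*‖J u‖^2 := by
      simp only [Complex.sub_im, Complex.mul_im, Complex.ofReal_re, Complex.ofReal_im]
      ring
    have habs : ‖(inner ℂ u (B u) : ℂ)‖
        = Real.sqrt (((a u u).re - z.re*‖J u‖^2)^2 + ((a u u).im - z.im*‖J u‖^2)^2) := by
      rw [hw, Complex.norm_def, Complex.normSq_apply, hre, him]
      congr 1
      ring
    have hzabs : ‖z‖ = Real.sqrt (z.re^2 + z.im^2) := by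
      rw [Complex.norm_def, Complex.normSq_apply]; congr 1; ring
    have hn : (0:ℝ) ≤ ‖u‖^2 := sq_nonneg _
    have hs0 : (0:ℝ) ≤ ‖J u‖^2 := sq_nonneg _
    have hscH : ‖J u‖^2 ≤ cH^2*‖u‖^2 := by
      have := hJbdd u
      nlinarith [norm_nonneg u, norm_nonneg (J u)]
    have hpp : δ*‖u‖^2 ≤ (a u u).re := hco u
    have hqq : |(a u u).im| ≤ M*‖u‖^2 := by
      have h1 : |(a u u).im| ≤ ‖a u u‖ := Complex.abs_im_le_norm _
      have h2 : ‖a u u‖ = ‖a u u‖ := rfl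
      have h3 := ha u u
      have e : M*‖u‖*‖u‖ = M*‖u‖^2 := by ring
      rw [h2] at h1
      linarith [e ▸ h3]
    obtain ⟨e1, e2⟩ := core_est M δ cH hM hδ hcH (a u u).re (a u u).im (‖u‖^2) (‖J u‖^2)
      z.re z.im hn hs0 hscH hpp hqq hzRe
    rw [habs, hzabs]
    exact ⟨e1, e2⟩
  have hδ1 : (0:ℝ) < Real.sqrt η * δ := by positivity
  have hlow : ∀ u : V, (Real.sqrt η * δ) * ‖u‖ ≤ ‖B u‖ := by
    intro u
    rcases eq_or_ne u 0 with rfl | hu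
    · simp
    · have hu0 : 0 < ‖u‖ := norm_pos_iff.mpr hu
      have h1 := (hEst u).1
      have h2 : ‖(inner ℂ u (B u) : ℂ)‖ ≤ ‖u‖ * ‖B u‖ := by
        exact norm_inner_le_norm _ _
      nlinarith [le_trans h1 h2, hu0]
  have hKnn : (0:ℝ) ≤ (Real.sqrt η * δ)⁻¹ := by positivity
  have hanti : AntilipschitzWith ⟨(Real.sqrt η * δ)⁻¹, hKnn⟩ B := by
    apply B.antilipschitz_of_bound
    intro u
    have h2 := mul_le_mul_of_nonneg_left (hlow u) hKnn
    rw [← mul_assoc, inv_mul_cancel₀ hδ1.ne', one_mul] at h2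
    exact h2
  have hker : B.ker = ⊥ := (LinearMap.ker_eq_bot (f := (B : V →ₗ[ℂ] V))).mpr hanti.injective
  have hclosed : IsClosed ((LinearMap.range (B : V →ₗ[ℂ] V) : Submodule ℂ V) : Set V) := by
    rw [LinearMap.coe_range]
    exact hanti.isClosed_range B.uniformContinuous
  haveI : CompleteSpace (LinearMap.range (B : V →ₗ[ℂ] V)) := hclosed.completeSpace_coe
  have hrange : LinearMap.range (B : V →ₗ[ℂ] V) = ⊤ := by
    rw [← Submodule.orthogonal_eq_bot_iff, Submodule.eq_bot_iff]
    intro w hw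
    have h0 : (inner ℂ (B w) w : ℂ) = 0 :=
      (Submodule.mem_orthogonal _ w).mp hw (B w) (LinearMap.mem_range_self _ w)
    have h1 : (inner ℂ w (B w) : ℂ) = 0 := by
      rw [← inner_conj_symm, h0]; simp
    have h2 := (hEst w).1
    rw [h1] at h2
    simp only [norm_zero] at h2
    have h3 : ‖w‖^2 ≤ 0 := by nlinarith [Real.sqrt_pos.mpr hη0]
    have h4 : ‖w‖ = 0 := by nlinarith [norm_nonneg w, sq_nonneg ‖w‖]
    exact norm_eq_zero.mp h4
  let Beq : V ≃L[ℂ] V := ContinuousLinearEquiv.ofBijective B hker hrange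
  let Jadj := ContinuousLinearMap.adjoint J
  let sol : H → V := fun x => Beq.symm (-(Jadj x))
  let R : H →L[ℂ] H := J.comp (((Beq.symm : V ≃L[ℂ] V) : V →L[ℂ] V).comp (-Jadj))
  have hRx : ∀ x, R x = J (sol x) := fun x => rfl
  have hBsol : ∀ x : H, B (sol x) = -(Jadj x) := fun x =>
    Beq.apply_symm_apply (-(Jadj x))
  have hinner_adj : ∀ (x : H) (v : V), (inner ℂ v (Jadj x) : ℂ) = (inner ℂ (J v) x : ℂ) := by
    intro x v
    calc (inner ℂ v (Jadj x) : ℂ)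
        = (starRingEnd ℂ) ((inner ℂ (Jadj x) v : ℂ)) := (inner_conj_symm _ _).symm
      _ = (starRingEnd ℂ) ((inner ℂ x (J v) : ℂ)) := by
            rw [ContinuousLinearMap.adjoint_inner_left]
      _ = (inner ℂ (J v) x : ℂ) := inner_conj_symm _ _
  refine ⟨R, ?_, ?_, ?_⟩
  · intro x
    refine ⟨sol x, (hRx x).symm, ?_⟩
    intro v
    have h1 : (inner ℂ v (B (sol x)) : ℂ)
        = a (sol x) v - z * (inner ℂ (J v) (J (sol x)) : ℂ) := hB _ v
    rw [hBsol x] at h1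
    have h2 : (inner ℂ v (-(Jadj x)) : ℂ) = -(inner ℂ (J v) x : ℂ) := by
      rw [inner_neg_right, hinner_adj]
    rw [h2] at h1
    rw [inner_sub_right, inner_smul_right, hRx x]
    linear_combination -h1
  · intro u w hw
    have hBu : B u = -(Jadj (z • J u - w)) := by
      apply ext_inner_left ℂ
      intro v
      rw [hB u v, hw v, inner_neg_right, hinner_adj, inner_sub_right, inner_smul_right]
      ring
    rw [hRx]
    have hsol : sol (z • J u - w) = u := by
      show Beq.symm (-(Jadj (z • J u - w))) = u
      rw [← hBu]
      exact Beq.symm_apply_apply u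
    rw [hsol]
  · apply ContinuousLinearMap.opNorm_le_bound
    · positivity
    · intro x
      rw [hRx x]
      have h2 := (hEst (sol x)).2
      have h3 : (inner ℂ (sol x) (B (sol x)) : ℂ) = -(inner ℂ (J (sol x)) x : ℂ) := by
        rw [hBsol x, inner_neg_right, hinner_adj]
      rw [h3] at h2
      have h4 : ‖(-(inner ℂ (J (sol x)) x : ℂ))‖
          = ‖(inner ℂ (J (sol x)) x : ℂ)‖ := by
        rw [norm_neg]
      have h5 : ‖(inner ℂ (J (sol x)) x : ℂ)‖ ≤ ‖J (sol x)‖ * ‖x‖ := norm_inner_le_norm _ _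
      have h6 : ε * ((1+‖z‖)*‖J (sol x)‖^2) ≤ ‖J (sol x)‖ * ‖x‖ := by
        rw [h4] at h2
        linarith
      have h1z : (0:ℝ) < 1 + ‖z‖ := by positivity
      rcases eq_or_lt_of_le (norm_nonneg (J (sol x))) with h7 | h7
      · rw [← h7]
        positivity
      · rw [div_mul_eq_mul_div, le_div_iff₀ h1z]
        have h8 : ε * (‖J (sol x)‖ * (1+‖z‖)) ≤ ‖x‖ := by
          nlinarith [h6, h7]
        have h9 := mul_le_mul_of_nonneg_left h8 (inv_nonneg.mpr hε0.le)
        rw [← mul_assoc, inv_mul_cancel₀ hε0.ne', one_mul] at h9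
        linarith
end

section
/- Let w ∈ L²(0,T;V) ∩ C([0,T];H) with w(0) = 0 satisfy the integral inequality ‖w(t)‖_V ≤ ∫₀ᵗ (c/(t−s)) ω(t−s) ‖w(s)‖_V ds for a.e. t ∈ [0,T], where ω is a modulus of continuity with ∫₀ᵀ ω(s)/s ds < ∞. Then w ≡ 0 on [0,T]. -/
open MeasureTheory Set
open scoped ENNReal NNReal

private lemma lint_neg (f : ℝ → ℝ≥0∞) : ∫⁻ x, f (-x) = ∫⁻ x, f x := by
  have hmap : Measure.map (⇑(MeasurableEquiv.neg ℝ)) (volume : Measure ℝ) = volume := by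
    rw [show ⇑(MeasurableEquiv.neg ℝ) = (Neg.neg : ℝ → ℝ) from rfl, Measure.map_neg_eq_self]
  have h := lintegral_map_equiv (μ := (volume : Measure ℝ)) f (MeasurableEquiv.neg ℝ)
  rw [hmap] at h
  exact h.symm

private lemma lint_reflect (f : ℝ → ℝ≥0∞) (t : ℝ) : ∫⁻ x, f (t - x) = ∫⁻ x, f x := by
  calc ∫⁻ x, f (t - x) = ∫⁻ x, (fun y => f (t + y)) (-x) := by
        simp only [sub_eq_add_neg]
    _ = ∫⁻ y, f (t + y) := lint_neg (fun y => f (t + y))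
    _ = ∫⁻ x, f x := lintegral_add_left_eq_self f t

private lemma lint_shift (f : ℝ → ℝ≥0∞) (s : ℝ) : ∫⁻ x, f (x - s) = ∫⁻ x, f x := by
  calc ∫⁻ x, f (x - s) = ∫⁻ x, f (x + (-s)) := by simp only [sub_eq_add_neg]
    _ = ∫⁻ x, f x := lintegral_add_right_eq_self f (-s)

private lemma kmass_le (k : ℝ → ℝ≥0∞) (τ x y : ℝ) (h : y - x ≤ τ) :
    ∫⁻ s in Ioo x y, k (y - s) ≤ ∫⁻ u in Ioc 0 τ, k u := by
  have h1 : ∫⁻ s in Ioo x y, k (y - s) = ∫⁻ u in Ioo 0 (y - x), k u := by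
    rw [← lintegral_indicator measurableSet_Ioo, ← lintegral_indicator measurableSet_Ioo]
    rw [← lint_reflect (fun u => (Ioo (0:ℝ) (y - x)).indicator k u) y]
    refine lintegral_congr fun s => ?_
    simp only [Set.indicator_apply, mem_Ioo]
    refine if_congr ?_ rfl rfl
    constructor
    · rintro ⟨h1, h2⟩; constructor <;> linarith
    · rintro ⟨h1, h2⟩; constructor <;> linarith
  rw [h1]
  exact lintegral_mono_set (fun u hu => ⟨hu.1, le_trans hu.2.le h⟩)

private lemma kmass_le' (k : ℝ → ℝ≥0∞) (τ s b : ℝ) (h : b - s ≤ τ) :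
    ∫⁻ t in Ioc s b, k (t - s) ≤ ∫⁻ u in Ioc 0 τ, k u := by
  have h1 : ∫⁻ t in Ioc s b, k (t - s) = ∫⁻ u in Ioc 0 (b - s), k u := by
    rw [← lintegral_indicator measurableSet_Ioc, ← lintegral_indicator measurableSet_Ioc]
    rw [← lint_shift (fun u => (Ioc (0:ℝ) (b - s)).indicator k u) s]
    refine lintegral_congr fun t => ?_
    simp only [Set.indicator_apply, mem_Ioc]
    refine if_congr ?_ rfl rfl
    constructor
    · rintro ⟨h1, h2⟩; constructor <;> linarith
    · rintro ⟨h1, h2⟩; constructor <;> linarith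
  rw [h1]
  exact lintegral_mono_set (fun u hu => ⟨hu.1, le_trans hu.2 h⟩)

private lemma sqrt_sq (x : ℝ≥0∞) : (x ^ (2⁻¹ : ℝ)) ^ (2 : ℝ) = x := by
  rw [← ENNReal.rpow_mul]; norm_num

private lemma conv_sq (k φ : ℝ → ℝ≥0∞) (hk : Measurable k) (hφ : Measurable φ)
    (hφfin : ∀ s, φ s ≠ ∞) (a b τ : ℝ) (hab : a ≤ b) (hbτ : b ≤ a + τ)
    (hKfin : ∫⁻ u in Ioc 0 τ, k u ≠ ∞) :
    ∫⁻ t in Ioc a b, (∫⁻ s in Ioo a t, k (t - s) * φ s) ^ (2:ℝ)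
      ≤ (∫⁻ u in Ioc 0 τ, k u) * ((∫⁻ u in Ioc 0 τ, k u) * ∫⁻ s in Ioc a b, φ s ^ (2:ℝ)) := by
  set Kτ := ∫⁻ u in Ioc 0 τ, k u with hKτdef
  have conj : Real.HolderConjugate 2 2 := Real.HolderConjugate.two_two
  -- pointwise Cauchy-Schwarz
  have hcs : ∀ t ∈ Ioc a b, (∫⁻ s in Ioo a t, k (t - s) * φ s) ^ (2:ℝ)
      ≤ Kτ * ∫⁻ s in Ioo a t, k (t - s) * φ s ^ (2:ℝ) := by
    intro t ht
    have hmeas1 : Measurable fun s : ℝ => k (t - s) :=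
      hk.comp (measurable_const.sub measurable_id)
    have h1 := ENNReal.lintegral_mul_le_Lp_mul_Lq (volume.restrict (Ioo a t)) conj
      (f := fun s => (k (t - s)) ^ (2⁻¹:ℝ)) (g := fun s => (k (t - s)) ^ (2⁻¹:ℝ) * φ s)
      ((hmeas1.pow_const _).aemeasurable) (((hmeas1.pow_const _).mul hφ).aemeasurable)
    have e1 : ∫⁻ s in Ioo a t, ((fun s => (k (t - s)) ^ (2⁻¹:ℝ)) *
        fun s => (k (t - s)) ^ (2⁻¹:ℝ) * φ s) s = ∫⁻ s in Ioo a t, k (t - s) * φ s := by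
      refine lintegral_congr fun s => ?_
      simp only [Pi.mul_apply]
      rw [← mul_assoc, ← ENNReal.rpow_add_of_nonneg _ _ (by norm_num) (by norm_num)]
      norm_num
    have e2 : ∫⁻ s in Ioo a t, ((k (t - s)) ^ (2⁻¹:ℝ)) ^ (2:ℝ) = ∫⁻ s in Ioo a t, k (t - s) :=
      lintegral_congr fun s => sqrt_sq _
    have e3 : ∫⁻ s in Ioo a t, ((k (t - s)) ^ (2⁻¹:ℝ) * φ s) ^ (2:ℝ)
        = ∫⁻ s in Ioo a t, k (t - s) * φ s ^ (2:ℝ) := by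
      refine lintegral_congr fun s => ?_
      rw [ENNReal.mul_rpow_of_nonneg _ _ (by norm_num : (0:ℝ) ≤ 2), sqrt_sq]
    rw [e1, e2, e3] at h1
    have hJ1 : ∫⁻ s in Ioo a t, k (t - s) ≤ Kτ := kmass_le k τ a t (by linarith [ht.2])
    calc (∫⁻ s in Ioo a t, k (t - s) * φ s) ^ (2:ℝ)
        ≤ ((∫⁻ s in Ioo a t, k (t - s)) ^ (1/2:ℝ) *
            (∫⁻ s in Ioo a t, k (t - s) * φ s ^ (2:ℝ)) ^ (1/2:ℝ)) ^ (2:ℝ) :=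
          ENNReal.rpow_le_rpow h1 (by norm_num)
      _ = (∫⁻ s in Ioo a t, k (t - s)) * (∫⁻ s in Ioo a t, k (t - s) * φ s ^ (2:ℝ)) := by
          rw [ENNReal.mul_rpow_of_nonneg _ _ (by norm_num : (0:ℝ) ≤ 2)]
          rw [show (1/2 : ℝ) = 2⁻¹ by norm_num, sqrt_sq, sqrt_sq]
      _ ≤ Kτ * (∫⁻ s in Ioo a t, k (t - s) * φ s ^ (2:ℝ)) := mul_le_mul_left hJ1 _
  -- swap and bound
  have hswap : ∫⁻ t in Ioc a b, ∫⁻ s in Ioo a t, k (t - s) * φ s ^ (2:ℝ)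
      ≤ Kτ * ∫⁻ s in Ioc a b, φ s ^ (2:ℝ) := by
    have hrw : ∀ t ∈ Ioc a b, ∫⁻ s in Ioo a t, k (t - s) * φ s ^ (2:ℝ)
        = ∫⁻ s in Ioc a b, (if s < t then k (t - s) * φ s ^ (2:ℝ) else 0) := by
      intro t ht
      have hset : Iio t ∩ Ioc a b = Ioo a t := by
        ext s
        simp only [mem_inter_iff, mem_Iio, mem_Ioc, mem_Ioo]
        exact ⟨fun h => ⟨h.2.1, h.1⟩, fun h => ⟨h.2, h.1, h.2.le.trans ht.2⟩⟩
      calc ∫⁻ s in Ioo a t, k (t - s) * φ s ^ (2:ℝ)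
          = ∫⁻ s in Iio t ∩ Ioc a b, k (t - s) * φ s ^ (2:ℝ) := by rw [hset]
        _ = ∫⁻ s in Ioc a b, (Iio t).indicator (fun s => k (t - s) * φ s ^ (2:ℝ)) s := by
            rw [lintegral_indicator measurableSet_Iio,
              Measure.restrict_restrict measurableSet_Iio]
        _ = ∫⁻ s in Ioc a b, (if s < t then k (t - s) * φ s ^ (2:ℝ) else 0) :=
            lintegral_congr fun s => by simp [Set.indicator_apply, Set.mem_Iio]
    have hmeasF : Measurable (Function.uncurry
        (fun t s : ℝ => if s < t then k (t - s) * φ s ^ (2:ℝ) else 0)) := by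
      have huncurry : (Function.uncurry
          (fun t s : ℝ => if s < t then k (t - s) * φ s ^ (2:ℝ) else 0))
          = fun p : ℝ × ℝ => if p.2 < p.1 then k (p.1 - p.2) * φ p.2 ^ (2:ℝ) else 0 := rfl
      rw [huncurry]
      exact Measurable.ite (measurableSet_lt measurable_snd measurable_fst)
        ((hk.comp (measurable_fst.sub measurable_snd)).mul
          ((hφ.comp measurable_snd).pow_const _)) measurable_const
    have hinner : ∀ s ∈ Ioc a b,
        (∫⁻ t in Ioc a b, (if s < t then k (t - s) * φ s ^ (2:ℝ) else 0))
          ≤ φ s ^ (2:ℝ) * Kτ := by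
      intro s hs
      have hφ2fin : φ s ^ (2:ℝ) ≠ ∞ := ENNReal.rpow_ne_top_of_nonneg (by norm_num) (hφfin s)
      calc (∫⁻ t in Ioc a b, (if s < t then k (t - s) * φ s ^ (2:ℝ) else 0))
          = ∫⁻ t in Ioc a b, (Ioi s).indicator (fun t => k (t - s) * φ s ^ (2:ℝ)) t :=
            lintegral_congr fun t => by simp [Set.indicator_apply, Set.mem_Ioi]
        _ = ∫⁻ t in Ioi s ∩ Ioc a b, k (t - s) * φ s ^ (2:ℝ) := by
            rw [lintegral_indicator measurableSet_Ioi,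
              Measure.restrict_restrict measurableSet_Ioi]
        _ ≤ ∫⁻ t in Ioc s b, k (t - s) * φ s ^ (2:ℝ) :=
            lintegral_mono_set (fun t ht => ⟨ht.1, ht.2.2⟩)
        _ = (∫⁻ t in Ioc s b, k (t - s)) * φ s ^ (2:ℝ) :=
            lintegral_mul_const' _ _ hφ2fin
        _ ≤ Kτ * φ s ^ (2:ℝ) := mul_le_mul_left (kmass_le' k τ s b (by linarith [hs.1])) _
        _ = φ s ^ (2:ℝ) * Kτ := mul_comm _ _
    calc ∫⁻ t in Ioc a b, ∫⁻ s in Ioo a t, k (t - s) * φ s ^ (2:ℝ)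
        = ∫⁻ t in Ioc a b, ∫⁻ s in Ioc a b, (if s < t then k (t - s) * φ s ^ (2:ℝ) else 0) :=
          setLIntegral_congr_fun_ae measurableSet_Ioc (ae_of_all _ hrw)
      _ = ∫⁻ s in Ioc a b, ∫⁻ t in Ioc a b, (if s < t then k (t - s) * φ s ^ (2:ℝ) else 0) :=
          lintegral_lintegral_swap hmeasF.aemeasurable
      _ ≤ ∫⁻ s in Ioc a b, φ s ^ (2:ℝ) * Kτ :=
          lintegral_mono_ae ((ae_restrict_iff' measurableSet_Ioc).2 (ae_of_all _ hinner))
      _ = (∫⁻ s in Ioc a b, φ s ^ (2:ℝ)) * Kτ := lintegral_mul_const' _ _ hKfin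
      _ = Kτ * ∫⁻ s in Ioc a b, φ s ^ (2:ℝ) := mul_comm _ _
  calc ∫⁻ t in Ioc a b, (∫⁻ s in Ioo a t, k (t - s) * φ s) ^ (2:ℝ)
      ≤ ∫⁻ t in Ioc a b, Kτ * ∫⁻ s in Ioo a t, k (t - s) * φ s ^ (2:ℝ) :=
        lintegral_mono_ae ((ae_restrict_iff' measurableSet_Ioc).2 (ae_of_all _ hcs))
    _ = Kτ * ∫⁻ t in Ioc a b, ∫⁻ s in Ioo a t, k (t - s) * φ s ^ (2:ℝ) :=
        lintegral_const_mul' _ _ hKfin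
    _ ≤ Kτ * (Kτ * ∫⁻ s in Ioc a b, φ s ^ (2:ℝ)) := mul_le_mul_right hswap _

/- STATEMENT 10 (Gronwall-type uniqueness lemma): if w ∈ L²(0,T;V) ∩ C([0,T];H)
with w(0)=0 satisfies ‖w(t)‖_V ≤ ∫₀ᵗ (c/(t−s)) ω(t−s) ‖w(s)‖_V ds a.e., where ω is a
modulus of continuity with ∫₀ᵀ ω(s)/s ds < ∞, then w ≡ 0 on [0,T]. -/

theorem statement10
    (V H : Type*) [NormedAddCommGroup V] [NormedSpace ℝ V] [CompleteSpace V]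
    [NormedAddCommGroup H] [NormedSpace ℝ H] [CompleteSpace H]
    (ι : V →L[ℝ] H) (hιinj : Function.Injective ι)
    (T c : ℝ) (hT : 0 < T) (hc : 0 < c)
    (ω : ℝ → ℝ) (hωcont : ContinuousOn ω (Set.Icc 0 T)) (hω0 : ω 0 = 0)
    (hωpos : ∀ s ∈ Set.Icc 0 T, 0 ≤ ω s)
    (hωL1 : IntegrableOn (fun s => ω s / s) (Set.Ioc 0 T))
    (w : ℝ → V)
    (hwL2 : MemLp w 2 (volume.restrict (Set.Ioc 0 T)))
    (hwcont : ContinuousOn (fun t => ι (w t)) (Set.Icc 0 T))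
    (hw0 : w 0 = 0)
    (hineq : ∀ᵐ t ∂(volume.restrict (Set.Ioc 0 T)),
        ‖w t‖ ≤ ∫ s in (0:ℝ)..t, c / (t - s) * ω (t - s) * ‖w s‖) :
    ∀ t ∈ Set.Icc 0 T, w t = 0 := by
  set μT := volume.restrict (Set.Ioc 0 T) with hμT
  -- measurable representative
  have hsm := hwL2.aestronglyMeasurable
  set g := hsm.mk w with hgdef
  have hg : w =ᵐ[μT] g := hsm.ae_eq_mk
  have hgm : StronglyMeasurable g := hsm.stronglyMeasurable_mk
  set φ : ℝ → ℝ≥0∞ := fun s => (‖g s‖₊ : ℝ≥0∞) with hφdef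
  have hφ : Measurable φ := hgm.enorm
  have hφfin : ∀ s, φ s ≠ ∞ := fun s => ENNReal.coe_ne_top
  -- extended modulus
  set ω' : ℝ → ℝ := fun u => ω (min (max u 0) T) with hω'def
  have hclamp : ∀ u : ℝ, min (max u 0) T ∈ Set.Icc 0 T :=
    fun u => ⟨le_min (le_max_right u 0) hT.le, min_le_right _ _⟩
  have hω'cont : Continuous ω' :=
    hωcont.comp_continuous ((continuous_id.max continuous_const).min continuous_const) hclamp
  have hω'eq : ∀ u ∈ Set.Ioc 0 T, ω' u = ω u := by
    intro u hu
    simp only [hω'def]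
    rw [max_eq_left hu.1.le, min_eq_left hu.2]
  -- kernel
  set k : ℝ → ℝ≥0∞ := fun u => ENNReal.ofReal (c * ω' u / u) with hkdef
  have hk : Measurable k :=
    ENNReal.measurable_ofReal.comp ((measurable_const.mul hω'cont.measurable).div measurable_id)
  -- total mass finite
  have hmassT : ∫⁻ u in Set.Ioc 0 T, k u ≠ ∞ := by
    have hint : IntegrableOn (fun u => c * ω' u / u) (Set.Ioc 0 T) := by
      have : IntegrableOn (fun u => c * (ω u / u)) (Set.Ioc 0 T) := hωL1.const_mul c
      refine this.congr_fun (fun u hu => ?_) measurableSet_Ioc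
      rw [hω'eq u hu]; ring
    have hnn : 0 ≤ᵐ[volume.restrict (Set.Ioc 0 T)] fun u => c * ω' u / u := by
      refine (ae_restrict_iff' measurableSet_Ioc).2 (ae_of_all _ fun u hu => ?_)
      simp only [Pi.zero_apply]
      rw [hω'eq u hu]
      exact div_nonneg (mul_nonneg hc.le (hωpos u ⟨hu.1.le, hu.2⟩)) hu.1.le
    rw [← ofReal_integral_eq_lintegral_ofReal hint hnn]
    exact ENNReal.ofReal_ne_top
  -- choose τ
  obtain ⟨τ, hτpos, hτT, hKτlt⟩ :
      ∃ τ : ℝ, 0 < τ ∧ τ ≤ T ∧ (∫⁻ u in Set.Ioc 0 τ, k u) < 1 := by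
    set m : Measure ℝ := volume.withDensity k with hmdef
    have happ : ∀ r : ℝ, m (Set.Ioc 0 r) = ∫⁻ u in Set.Ioc 0 r, k u :=
      fun r => withDensity_apply k measurableSet_Ioc
    have hiInter : (⋂ n : ℕ, Set.Ioc (0:ℝ) (T / (n + 1))) = ∅ := by
      ext u
      simp only [Set.mem_iInter, Set.mem_Ioc, Set.mem_empty_iff_false, iff_false, not_forall]
      by_contra hcon
      push_neg at hcon
      have h0 := (hcon 0).1
      obtain ⟨n, hn⟩ := exists_nat_gt (T / u)
      have h2 := (hcon n).2
      have h3 : T < u * n := by rw [mul_comm]; exact (div_lt_iff₀ h0).1 hn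
      have h4 : T / (↑n + 1) < u := by
        rw [div_lt_iff₀ (by positivity)]
        nlinarith
      linarith
    have htend := tendsto_measure_iInter_atTop (μ := m)
      (s := fun n : ℕ => Set.Ioc (0:ℝ) (T / (n + 1)))
      (fun n => measurableSet_Ioc.nullMeasurableSet)
      (fun i j hij => Set.Ioc_subset_Ioc le_rfl (by
        apply div_le_div_of_nonneg_left hT.le (by positivity)
        exact_mod_cast by exact_mod_cast add_le_add_left (Nat.cast_le.2 hij) 1))
      ⟨0, by
        rw [happ]
        refine ne_top_of_le_ne_top hmassT (lintegral_mono_set (Set.Ioc_subset_Ioc le_rfl ?_))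
        norm_num⟩
    rw [hiInter, measure_empty] at htend
    have hev := htend.eventually_lt_const (by norm_num : (0:ℝ≥0∞) < 1)
    obtain ⟨n, hn⟩ := hev.exists
    refine ⟨T / (n + 1), by positivity, ?_, ?_⟩
    · exact div_le_self hT.le (by exact_mod_cast Nat.le_add_left 1 n)
    · rw [← happ]; exact hn
  set Kτ := ∫⁻ u in Set.Ioc 0 τ, k u with hKτdef
  have hKτfin : Kτ ≠ ∞ := (hKτlt.trans ENNReal.one_lt_top).ne
  -- key a.e. estimate
  have hE : ∀ᵐ t ∂μT, φ t ≤ ∫⁻ s in Set.Ioc 0 t, k (t - s) * φ s := by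
    filter_upwards [hineq, hg, ae_restrict_mem measurableSet_Ioc] with t h1 h2 ht
    have hIeq : (∫ s in (0:ℝ)..t, c / (t - s) * ω (t - s) * ‖w s‖)
        = ∫ s in Set.Ioc 0 t, c / (t - s) * ω (t - s) * ‖w s‖ :=
      intervalIntegral.integral_of_le ht.1.le
    rw [hIeq] at h1
    have hstep1 : (φ t : ℝ≥0∞) ≤
        ∫⁻ s in Set.Ioc 0 t, ENNReal.ofReal (c / (t - s) * ω (t - s) * ‖w s‖) := by
      have hnn : 0 ≤ᵐ[volume.restrict (Set.Ioc 0 t)]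
          fun s => c / (t - s) * ω (t - s) * ‖w s‖ := by
        refine (ae_restrict_iff' measurableSet_Ioc).2 (ae_of_all _ fun s hs => ?_)
        rcases hs.2.lt_or_eq with hlt | heq
        · have hts : t - s ∈ Set.Icc 0 T := ⟨by linarith, by linarith [ht.2, hs.1]⟩
          have := hωpos _ hts
          have h0 : 0 < t - s := by linarith
          positivity
        · rw [heq]; simp
      by_cases hint : IntegrableOn (fun s => c / (t - s) * ω (t - s) * ‖w s‖)
          (Set.Ioc 0 t) volume
      · calc (φ t : ℝ≥0∞) = ENNReal.ofReal ‖g t‖ := (ofReal_norm _).symm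
          _ ≤ ENNReal.ofReal (∫ s in Set.Ioc 0 t, c / (t - s) * ω (t - s) * ‖w s‖) := by
              apply ENNReal.ofReal_le_ofReal
              rw [← h2]; exact h1
          _ = ∫⁻ s in Set.Ioc 0 t, ENNReal.ofReal (c / (t - s) * ω (t - s) * ‖w s‖) :=
              ofReal_integral_eq_lintegral_ofReal hint hnn
      · have : (∫ s in Set.Ioc 0 t, c / (t - s) * ω (t - s) * ‖w s‖) = 0 :=
          integral_undef hint
        rw [this] at h1
        have hg0 : ‖g t‖ ≤ 0 := by rw [← h2]; exact h1
        have : ‖g t‖ = 0 := le_antisymm hg0 (norm_nonneg _)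
        simp only [hφdef]
        rw [show (‖g t‖₊ : ℝ≥0∞) = ENNReal.ofReal ‖g t‖ from (ofReal_norm _).symm, this]
        simp
    refine hstep1.trans ?_
    have hwg : (fun s => ENNReal.ofReal (c / (t - s) * ω (t - s) * ‖w s‖))
        =ᵐ[volume.restrict (Set.Ioc 0 t)]
        fun s => ENNReal.ofReal (c / (t - s) * ω (t - s) * ‖g s‖) := by
      have := ae_restrict_of_ae_restrict_of_subset (Set.Ioc_subset_Ioc le_rfl ht.2) hg
      filter_upwards [this] with s hs
      rw [hs]
    rw [lintegral_congr_ae hwg]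
    refine lintegral_mono_ae ((ae_restrict_iff' measurableSet_Ioc).2 (ae_of_all _ fun s hs => ?_))
    rcases hs.2.lt_or_eq with hlt | heq
    · have hts : t - s ∈ Set.Ioc 0 T := ⟨by linarith, by linarith [ht.2, hs.1]⟩
      have hωnn : 0 ≤ ω' (t - s) := by
        rw [hω'eq _ hts]; exact hωpos _ ⟨hts.1.le, hts.2⟩
      have hknn : 0 ≤ c * ω' (t - s) / (t - s) :=
        div_nonneg (mul_nonneg hc.le hωnn) hts.1.le
      have heqr : c / (t - s) * ω (t - s) * ‖g s‖ = c * ω' (t - s) / (t - s) * ‖g s‖ := by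
        rw [hω'eq _ hts]; ring
      rw [heqr, ENNReal.ofReal_mul hknn, ofReal_norm]; exact le_rfl
    · rw [heq]; simp
  -- the bootstrap step
  have hstep : ∀ A : ℝ, 0 ≤ A → A ≤ T →
      (∀ᵐ s ∂volume.restrict (Set.Ioc 0 A), φ s = 0) →
      (∀ᵐ s ∂volume.restrict (Set.Ioc 0 (min (A + τ) T)), φ s = 0) := by
    intro A hA0 hAT hzero
    set b := min (A + τ) T with hbdef
    have hAb : A ≤ b := le_min (by linarith) hAT
    have hbτ : b ≤ A + τ := min_le_left _ _
    have hbT : b ≤ T := min_le_right _ _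
    have hNfin : ∫⁻ t in Set.Ioc A b, φ t ^ (2:ℝ) ≠ ∞ := by
      have hg2 : MemLp g 2 μT := hwL2.ae_eq hg
      have hlt := hg2.2
      rw [eLpNorm_eq_lintegral_rpow_enorm_toReal (by norm_num) (by norm_num)] at hlt
      have h2 : ((2:ℝ≥0∞).toReal) = (2:ℝ) := by norm_num
      rw [h2] at hlt
      have hfin : (∫⁻ x, (‖g x‖₊ : ℝ≥0∞) ^ (2:ℝ) ∂μT) < ∞ := by
        have := (ENNReal.rpow_lt_top_iff_of_pos (by norm_num : (0:ℝ) < 1/2)).1 hlt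
        exact this
      refine ne_top_of_le_ne_top hfin.ne (lintegral_mono_set ?_)
      exact Set.Ioc_subset_Ioc hA0 hbT
    have hEb : ∀ᵐ t ∂volume.restrict (Set.Ioc A b),
        φ t ≤ ∫⁻ s in Set.Ioo A t, k (t - s) * φ s := by
      have hE' := ae_restrict_of_ae_restrict_of_subset (Set.Ioc_subset_Ioc hA0 hbT) hE
      filter_upwards [hE', ae_restrict_mem measurableSet_Ioc] with t hEt ht
      have hsplit : Set.Ioc (0:ℝ) A ∪ Set.Ioc A t = Set.Ioc 0 t :=
        Set.Ioc_union_Ioc_eq_Ioc hA0 ht.1.le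
      have hzero' : ∫⁻ s in Set.Ioc 0 A, k (t - s) * φ s = 0 := by
        have : (fun s => k (t - s) * φ s) =ᵐ[volume.restrict (Set.Ioc 0 A)] 0 := by
          filter_upwards [hzero] with s hs
          simp [hs]
        rw [lintegral_congr_ae this]
        simp
      calc φ t ≤ ∫⁻ s in Set.Ioc 0 t, k (t - s) * φ s := hEt
        _ = (∫⁻ s in Set.Ioc 0 A, k (t - s) * φ s) + ∫⁻ s in Set.Ioc A t, k (t - s) * φ s := by
            rw [← hsplit, lintegral_union measurableSet_Ioc (Set.Ioc_disjoint_Ioc_of_le le_rfl)]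
        _ = ∫⁻ s in Set.Ioc A t, k (t - s) * φ s := by rw [hzero', zero_add]
        _ = ∫⁻ s in Set.Ioo A t, k (t - s) * φ s :=
            setLIntegral_congr (Ioo_ae_eq_Ioc (μ := volume) (a := A) (b := t)).symm
    have hN : ∫⁻ t in Set.Ioc A b, φ t ^ (2:ℝ)
        ≤ Kτ * (Kτ * ∫⁻ t in Set.Ioc A b, φ t ^ (2:ℝ)) := by
      calc ∫⁻ t in Set.Ioc A b, φ t ^ (2:ℝ)
          ≤ ∫⁻ t in Set.Ioc A b, (∫⁻ s in Set.Ioo A t, k (t - s) * φ s) ^ (2:ℝ) :=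
            lintegral_mono_ae (hEb.mono fun t h => ENNReal.rpow_le_rpow h (by norm_num))
        _ ≤ Kτ * (Kτ * ∫⁻ s in Set.Ioc A b, φ s ^ (2:ℝ)) :=
            conv_sq k φ hk hφ hφfin A b τ hAb hbτ hKτfin
    have hN0 : ∫⁻ t in Set.Ioc A b, φ t ^ (2:ℝ) = 0 := by
      by_contra hne
      set N := ∫⁻ t in Set.Ioc A b, φ t ^ (2:ℝ) with hNdef
      have hlt2 : Kτ * (Kτ * N) < N := by
        have h1 : Kτ * N < N := by
          have := ENNReal.mul_lt_mul_left hne hNfin hKτlt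
          simpa using this
        calc Kτ * (Kτ * N) ≤ 1 * (Kτ * N) := mul_le_mul_left hKτlt.le _
          _ = Kτ * N := one_mul _
          _ < N := h1
      exact (hN.trans_lt hlt2).false
    have hz2 : ∀ᵐ s ∂volume.restrict (Set.Ioc A b), φ s = 0 := by
      have := (lintegral_eq_zero_iff (hφ.pow_const (2:ℝ))).1 hN0
      filter_upwards [this] with s hs
      simp only [Pi.zero_apply] at hs
      rcases ENNReal.rpow_eq_zero_iff.1 hs with ⟨h, _⟩ | ⟨h, hy⟩
      · exact h
      · norm_num at hy
    have hunion : Set.Ioc (0:ℝ) A ∪ Set.Ioc A b = Set.Ioc 0 b :=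
      Set.Ioc_union_Ioc_eq_Ioc hA0 hAb
    rw [← hunion, Measure.restrict_union (Set.Ioc_disjoint_Ioc_of_le le_rfl) measurableSet_Ioc,
      ae_add_measure_iff]
    exact ⟨hzero, hz2⟩
  -- iterate
  have hiter : ∀ n : ℕ, ∀ᵐ s ∂volume.restrict (Set.Ioc 0 (min ((n:ℝ) * τ) T)), φ s = 0 := by
    intro n
    induction n with
    | zero =>
      have : min ((0:ℕ) * τ : ℝ) T = 0 := by
        push_cast; rw [zero_mul]; exact min_eq_left hT.le
      rw [this]
      simp
    | succ n ih =>
      set A := min ((n:ℝ) * τ) T with hAdef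
      have hA0 : 0 ≤ A := le_min (by positivity) hT.le
      have hAT : A ≤ T := min_le_right _ _
      have h2 := hstep A hA0 hAT ih
      have hle : min (((n:ℕ)+1 : ℝ) * τ) T ≤ min (A + τ) T := by
        apply le_min _ (min_le_right _ _)
        rcases le_total ((n:ℝ) * τ) T with hc1 | hc1
        · have : A = (n:ℝ) * τ := min_eq_left hc1
          rw [this]
          calc min (((n:ℕ)+1 : ℝ) * τ) T ≤ ((n:ℕ)+1 : ℝ) * τ := min_le_left _ _
            _ = (n:ℝ) * τ + τ := by ring
        · have : A = T := min_eq_right hc1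
          rw [this]
          calc min (((n:ℕ)+1 : ℝ) * τ) T ≤ T := min_le_right _ _
            _ ≤ T + τ := by linarith
      have hsub : Set.Ioc (0:ℝ) (min (((n:ℕ)+1:ℝ) * τ) T) ⊆ Set.Ioc 0 (min (A + τ) T) :=
        Set.Ioc_subset_Ioc le_rfl hle
      have := ae_restrict_of_ae_restrict_of_subset hsub h2
      convert this using 3
      push_cast
      ring
  -- full vanishing
  have hfull : ∀ᵐ s ∂μT, φ s = 0 := by
    obtain ⟨n, hn⟩ := exists_nat_ge (T / τ)
    have hTn : T ≤ (n:ℝ) * τ := by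
      rw [div_le_iff₀ hτpos] at hn
      linarith
    have : min ((n:ℝ) * τ) T = T := min_eq_right hTn
    have h := hiter n
    rwa [this] at h
  have hwz : ∀ᵐ s ∂μT, w s = 0 := by
    filter_upwards [hfull, hg] with s h1 h2
    rw [h2]
    simpa [hφdef] using h1
  -- conclude pointwise
  intro t ht
  rcases eq_or_lt_of_le ht.1 with ht0 | ht0
  · rw [← ht0]; exact hw0
  have hnull : volume ({s : ℝ | ¬ w s = 0} ∩ Set.Ioc 0 T) = 0 := by
    have := hwz
    rw [ae_iff] at this
    rwa [hμT, Measure.restrict_apply' measurableSet_Ioc] at this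
  set Z : Set ℝ := {s : ℝ | s ∈ Set.Ioc 0 T ∧ w s = 0} with hZdef
  have htcl : t ∈ closure Z := by
    rw [Metric.mem_closure_iff]
    intro ε hε
    set m := max (t - ε) 0 with hmdef
    have hmt : m < t := max_lt (by linarith) ht0
    have hIoc : Set.Ioc m t ⊆ Set.Ioc 0 T :=
      fun s hs => ⟨lt_of_le_of_lt (le_max_right _ _) hs.1, hs.2.trans ht.2⟩
    have hnsub : ¬ (Set.Ioc m t ⊆ {s : ℝ | ¬ w s = 0}) := by
      intro hsub
      have hle : volume (Set.Ioc m t) = 0 :=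
        measure_mono_null (fun s hs => Set.mem_inter (hsub hs) (hIoc hs)) hnull
      rw [Real.volume_Ioc] at hle
      have := ENNReal.ofReal_eq_zero.1 hle
      linarith
    obtain ⟨s, hs1, hs2⟩ := not_subset.1 hnsub
    simp only [Set.mem_setOf_eq, not_not] at hs2
    refine ⟨s, ⟨hIoc hs1, hs2⟩, ?_⟩
    rw [Real.dist_eq, abs_of_nonneg (by linarith [hs1.2] : (0:ℝ) ≤ t - s)]
    have : t - ε ≤ m := le_max_left _ _
    linarith [hs1.1]
  have hZsub : Z ⊆ Set.Icc 0 T := fun s hs => ⟨hs.1.1.le, hs.1.2⟩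
  have hcw : ContinuousWithinAt (fun s => ι (w s)) Z t := ((hwcont t ht).mono hZsub)
  have himg := hcw.mem_closure_image htcl
  have himgsub : (fun s => ι (w s)) '' Z ⊆ {0} := by
    rintro _ ⟨s, hs, rfl⟩
    simp [hs.2]
  have hι0 : ι (w t) = 0 := by
    have hcl : closure ((fun s => ι (w s)) '' Z) ⊆ {0} :=
      closure_minimal himgsub isClosed_singleton
    simpa using hcl himg
  apply hιinj
  simpa using hι0
end

section
/- For a bounded Lipschitz domain Ω, every α > 1/4, and B : [0,T] → ℒ(L²(∂Ω)) with ‖B(t) − B(s)‖ ≤ c|t−s|^α, the non-autonomous form 𝔞(t;u,v) = ∫_Ω ∇u·∇v̄ + ∫_{∂Ω} B(t)(u|_{∂Ω}) v̄|_{∂Ω} on H¹(Ω) satisfies |𝔞(t;u,v) − 𝔞(s;u,v)| ≤ c' |t−s|^α ‖u‖_{H¹(Ω)} ‖v‖_{H^{s+1/2}(Ω)} for any s ∈ (0,1/2), using the boundedness of the fractional trace operator Tr_s : H^{s+1/2}(Ω) → H^s(∂Ω). -/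
/- STATEMENT 19: for a bounded Lipschitz domain Ω, α > 1/4 and B : [0,T] → ℒ(L²(∂Ω))
α-Hölder, the form 𝔞(t;u,v) = ∫_Ω ∇u·∇v̄ + ∫_∂Ω B(t)(u|_∂Ω) v̄|_∂Ω on H¹(Ω)
satisfies |𝔞(t;u,v) − 𝔞(s;u,v)| ≤ c'|t−s|^α ‖u‖_{H¹(Ω)} ‖v‖_{H^{s+1/2}(Ω)}, using the
boundedness of the Jerison–Kenig fractional trace Tr_s : H^{s+1/2}(Ω) → H^s(∂Ω).
Sobolev spaces are axiomatized: V = H¹(Ω), Hb = L²(∂Ω), G = L²(Ω)ᴺ, `grad`, `Tr`;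
Ns v denotes the H^{s+1/2}(Ω)-norm of v, and the chain of trace estimates
‖v|_∂Ω‖_{L²(∂Ω)} ≤ c_s ‖v|_∂Ω‖_{H^s(∂Ω)} ≤ c_s ‖v‖_{H^{s+1/2}(Ω)} is the
hypothesis hTrs. -/

theorem statement19
    (V Hb G : Type*)
    [NormedAddCommGroup V] [InnerProductSpace ℂ V] [CompleteSpace V]
    [NormedAddCommGroup Hb] [InnerProductSpace ℂ Hb] [CompleteSpace Hb]
    [NormedAddCommGroup G] [InnerProductSpace ℂ G] [CompleteSpace G]
    (T : ℝ) (hT : 0 < T)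
    (grad : V →L[ℂ] G) (Tr : V →L[ℂ] Hb)
    (α : ℝ) (hα : 1/4 < α) (B : ℝ → Hb →L[ℂ] Hb)
    (cB : ℝ) (hB : ∀ t ∈ Set.Icc 0 T, ∀ s ∈ Set.Icc 0 T, ‖B t - B s‖ ≤ cB * |t - s| ^ α)
    -- the H^{s+1/2}(Ω)-norm Ns (0 < s < 1/2) and the fractional trace estimate
    (Ns : V → ℝ) (hNs : ∀ v : V, 0 ≤ Ns v)
    (cs : ℝ) (hcs : 0 < cs) (hTrs : ∀ v : V, ‖Tr v‖ ≤ cs * Ns v) :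
    ∃ c' > 0, ∀ t ∈ Set.Icc 0 T, ∀ s ∈ Set.Icc 0 T, ∀ u v : V,
      ‖((inner ℂ (grad v) (grad u) : ℂ) + (inner ℂ (Tr v) (B t (Tr u)) : ℂ))
        - ((inner ℂ (grad v) (grad u) : ℂ) + (inner ℂ (Tr v) (B s (Tr u)) : ℂ))‖
        ≤ c' * |t - s| ^ α * ‖u‖ * Ns v := by
  have hcB : 0 ≤ cB := by
    have := hB T ⟨le_of_lt hT, le_refl T⟩ 0 ⟨le_refl 0, hT.le⟩
    have hpos : 0 < |T - (0:ℝ)| ^ α := by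
      apply Real.rpow_pos_of_pos; rw [abs_pos]; intro h; linarith [sub_eq_zero.mp h]
    nlinarith [norm_nonneg (B T - B 0)]
  refine ⟨(cB + 1) * cs * (‖Tr‖ + 1), by positivity, fun t ht s hs u v => ?_⟩
  have key : ((inner ℂ (grad v) (grad u) : ℂ) + (inner ℂ (Tr v) (B t (Tr u)) : ℂ))
        - ((inner ℂ (grad v) (grad u) : ℂ) + (inner ℂ (Tr v) (B s (Tr u)) : ℂ))
      = (inner ℂ (Tr v) ((B t - B s) (Tr u)) : ℂ) := by
    simp [inner_sub_right]
  rw [key]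
  have h1 : (0:ℝ) ≤ |t - s| ^ α := Real.rpow_nonneg (abs_nonneg _) α
  calc ‖(inner ℂ (Tr v) ((B t - B s) (Tr u)) : ℂ)‖
      ≤ ‖Tr v‖ * ‖(B t - B s) (Tr u)‖ := norm_inner_le_norm _ _
    _ ≤ (cs * Ns v) * (‖B t - B s‖ * ‖Tr u‖) := by
        apply mul_le_mul (hTrs v) ((B t - B s).le_opNorm _) (norm_nonneg _)
          (mul_nonneg hcs.le (hNs v))
    _ ≤ (cs * Ns v) * ((cB * |t - s| ^ α) * (‖Tr‖ * ‖u‖)) := by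
        apply mul_le_mul_of_nonneg_left _ (mul_nonneg hcs.le (hNs v))
        exact mul_le_mul (hB t ht s hs) (Tr.le_opNorm u) (norm_nonneg _)
          (mul_nonneg hcB h1)
    _ = (cB * cs * ‖Tr‖) * (|t - s| ^ α * ‖u‖ * Ns v) := by ring
    _ ≤ ((cB + 1) * cs * (‖Tr‖ + 1)) * (|t - s| ^ α * ‖u‖ * Ns v) := by
        apply mul_le_mul_of_nonneg_right _
          (mul_nonneg (mul_nonneg h1 (norm_nonneg u)) (hNs v))
        nlinarith [norm_nonneg (Tr : V →L[ℂ] Hb), hcs.le]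
    _ = (cB + 1) * cs * (‖Tr‖ + 1) * |t - s| ^ α * ‖u‖ * Ns v := by ring
end
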